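/- arXiv:1902.07359 — 2 statements merged into one kernel-verified Lean document; each statement's English description precedes it below -/
import Mathlib

section
/- For the neutral case α = 0 and κ ∈ (0,1), the fixation probability of inefficient individuals in model (M2) case (i), P(y) = (∫_{1-y}^1 e^{-2κu} du)/(∫_0^1 e^{-2κu} du) = (e^{-2κ(1-y)} - e^{-2κ})/(1 - e^{-2κ}), satisfies P(y) < y for all y ∈ (0,1). -/
open Real

lemma exp_integral_aux (c a b : ℝ) (h : c ≠ 0) :
    (∫ u in a..b, Real.exp (c * u)) = (Real.exp (c*b) - Real.exp (c*a))/c := by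
  rw [intervalIntegral.integral_comp_mul_left (fun x => Real.exp x) h, integral_exp]
  rw [smul_eq_mul]; ring

/-- Neutral case `α = 0` of model (M2), case (i): the fixation probability of inefficient
individuals satisfies `P(y) < y` on `(0,1)`, i.e. efficient individuals are favoured. -/
theorem stmt_14 (κ : ℝ) (hκ : κ ∈ Set.Ioo (0:ℝ) 1) (y : ℝ) (hy : y ∈ Set.Ioo (0:ℝ) 1) :
    (∫ u in (1 - y)..1, Real.exp (-2 * κ * u)) / (∫ u in (0:ℝ)..1, Real.exp (-2 * κ * u))
      = (Real.exp (-2 * κ * (1 - y)) - Real.exp (-2 * κ)) / (1 - Real.exp (-2 * κ)) ∧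
    (Real.exp (-2 * κ * (1 - y)) - Real.exp (-2 * κ)) / (1 - Real.exp (-2 * κ)) < y := by
  obtain ⟨hκ0, hκ1⟩ := hκ
  obtain ⟨hy0, hy1⟩ := hy
  have hc : (-2 * κ) ≠ 0 := by nlinarith
  have hlt : Real.exp (-2 * κ) < 1 := by
    rw [Real.exp_lt_one_iff]; nlinarith
  have hden : 1 - Real.exp (-2 * κ) ≠ 0 := by linarith
  constructor
  · rw [exp_integral_aux _ _ _ hc, exp_integral_aux _ _ _ hc]
    rw [div_div_div_cancel_right₀ hc]
    rw [div_eq_div_iff (sub_ne_zero.mpr (by rw [Ne, Real.exp_eq_exp]; intro h; nlinarith)) hden]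
    norm_num
    ring
  · rw [div_lt_iff₀ (by linarith)]
    -- strict convexity: exp((1-y)·(-2κ) + y·0) < (1-y)exp(-2κ) + y·exp 0
    have := strictConvexOn_exp.2 (Set.mem_univ (-2*κ)) (Set.mem_univ (0:ℝ))
      (by nlinarith : (-2*κ) ≠ (0:ℝ)) (by linarith : (0:ℝ) < 1 - y) hy0 (by ring)
    simp only [smul_eq_mul, Real.exp_zero, mul_zero, add_zero, mul_one] at this
    rw [show -2 * κ * (1 - y) = (1-y) * (-2*κ) by ring]
    linarith
end

section
/- Let Z be the continuous-time Markov chain on {1,2,3,...} with jump rates q(j, j+1) = αj + κj(j-1)/2 and q(j, j-1) = j(j-1)/2, with κ = 1 and α ∈ [0, 1/2). Then for the Lyapunov function f(n) = log n, the generator satisfies (Qf)(n) = αn·log(1+1/n) + (n(n-1)/2)·(log(1-1/n) + log(1+1/n)) for n ≥ 2, and there exist ε > 0 and N₀ such that (Qf)(n) ≤ -ε for all n ≥ N₀. -/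
open Real

lemma stmt15_aux (α : ℝ) (hα : α ∈ Set.Ico (0:ℝ) (1/2))
    (n : ℕ) (hn : 2 ≤ n) :
    (α * n + 1 * (n * ((n : ℝ) - 1) / 2)) * (Real.log (n + 1) - Real.log n)
        + (n * ((n : ℝ) - 1) / 2) * (Real.log ((n : ℝ) - 1) - Real.log n)
      = α * n * Real.log (1 + 1 / n)
        + (n * ((n : ℝ) - 1) / 2) * (Real.log (1 - 1 / n) + Real.log (1 + 1 / n)) := by
  have hn' : (2:ℝ) ≤ (n:ℝ) := by exact_mod_cast hn
  have h0 : (0:ℝ) < n := by linarith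
  have h1 : (0:ℝ) < (n:ℝ) - 1 := by linarith
  have hA : Real.log (1 + 1 / (n:ℝ)) = Real.log ((n:ℝ) + 1) - Real.log n := by
    rw [← Real.log_div (by positivity) (by positivity)]
    congr 1; field_simp
  have hB : Real.log (1 - 1 / (n:ℝ)) = Real.log ((n:ℝ) - 1) - Real.log n := by
    rw [← Real.log_div (by linarith) (by positivity)]
    congr 1; field_simp
  rw [hA, hB]; ring

/-- Foster–Lyapunov drift condition for the vertex counting process of the ASEG with
`κ = 1` and `α ∈ [0,1/2)`, using the Lyapunov function `f(n) = log n`. -/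
theorem stmt_15 (α : ℝ) (hα : α ∈ Set.Ico (0:ℝ) (1/2))
    (Qf : ℕ → ℝ)
    (hQf : ∀ n : ℕ, 2 ≤ n →
      Qf n = (α * n + 1 * (n * ((n : ℝ) - 1) / 2)) * (Real.log (n + 1) - Real.log n)
        + (n * ((n : ℝ) - 1) / 2) * (Real.log ((n : ℝ) - 1) - Real.log n)) :
    (∀ n : ℕ, 2 ≤ n →
      Qf n = α * n * Real.log (1 + 1 / n)
        + (n * ((n : ℝ) - 1) / 2) * (Real.log (1 - 1 / n) + Real.log (1 + 1 / n))) ∧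
    ∃ ε > (0:ℝ), ∃ N₀ : ℕ, ∀ n ≥ N₀, Qf n ≤ -ε := by
  obtain ⟨hα0, hα2⟩ := hα
  constructor
  · intro n hn
    rw [hQf n hn, stmt15_aux α ⟨hα0, hα2⟩ n hn]
  · set δ : ℝ := 1/2 - α with hδdef
    have hδ : 0 < δ := by simp only [hδdef]; linarith
    refine ⟨δ/2, by linarith, ⌈1/δ⌉₊ + 2, ?_⟩
    intro n hn
    have hn2 : 2 ≤ n := le_trans (by omega) hn
    have hn' : (2:ℝ) ≤ (n:ℝ) := by exact_mod_cast hn2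
    have h0 : (0:ℝ) < n := by linarith
    have h1 : (0:ℝ) < (n:ℝ) - 1 := by linarith
    have hnδ : 1/δ ≤ (n:ℝ) := by
      calc 1/δ ≤ (⌈1/δ⌉₊ : ℝ) := Nat.le_ceil _
        _ ≤ (n:ℝ) := by exact_mod_cast le_trans (by omega) hn
    have hinv : 1/(n:ℝ) ≤ δ := by
      have h1' : 1 ≤ (n:ℝ) * δ := (div_le_iff₀ hδ).mp hnδ
      rw [div_le_iff₀ h0]; nlinarith
    rw [hQf n hn2, stmt15_aux α ⟨hα0, hα2⟩ n hn2]
    -- bounds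
    have hlogA : Real.log (1 + 1/(n:ℝ)) ≤ 1/(n:ℝ) := by
      have := Real.log_le_sub_one_of_pos (x := 1 + 1/(n:ℝ)) (by positivity)
      linarith
    have hlogB : Real.log (1 - 1/(n:ℝ)) + Real.log (1 + 1/(n:ℝ)) ≤ -(1/(n:ℝ)^2) := by
      have hx : (0:ℝ) < 1 - 1/(n:ℝ) := by
        rw [sub_pos, div_lt_one h0]; linarith
      rw [← Real.log_mul (ne_of_gt hx) (by positivity)]
      have := Real.log_le_sub_one_of_pos (x := (1 - 1/(n:ℝ)) * (1 + 1/(n:ℝ)))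
        (by positivity)
      have heq : (1 - 1/(n:ℝ)) * (1 + 1/(n:ℝ)) - 1 = -(1/(n:ℝ)^2) := by
        field_simp; ring
      linarith
    have hT1 : α * n * Real.log (1 + 1/(n:ℝ)) ≤ α := by
      have : α * n * Real.log (1 + 1/(n:ℝ)) ≤ α * n * (1/(n:ℝ)) := by
        apply mul_le_mul_of_nonneg_left hlogA (by positivity)
      have heq : α * (n:ℝ) * (1/(n:ℝ)) = α := by field_simp
      linarith [heq ▸ this]
    have hS : (0:ℝ) ≤ (n:ℝ) * ((n:ℝ) - 1) / 2 := by positivity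
    have hT2 : (n:ℝ) * ((n:ℝ) - 1) / 2 * (Real.log (1 - 1/(n:ℝ)) + Real.log (1 + 1/(n:ℝ)))
        ≤ -(1/2) + 1/(2*(n:ℝ)) := by
      have h := mul_le_mul_of_nonneg_left hlogB hS
      have heq : (n:ℝ) * ((n:ℝ) - 1) / 2 * (-(1/(n:ℝ)^2)) = -(1/2) + 1/(2*(n:ℝ)) := by
        field_simp; ring
      linarith [heq ▸ h]
    have hfin : 1/(2*(n:ℝ)) ≤ δ/2 := by
      have : 1/(2*(n:ℝ)) = (1/(n:ℝ))/2 := by ring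
      linarith [this ▸ (by linarith : (1/(n:ℝ))/2 ≤ δ/2)]
    have : α - 1/2 + δ/2 = -(δ/2) := by simp only [hδdef]; ring
    linarith
end
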